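/- For all x, y, p ∈ I_q the functions a_p satisfy the second-order q-difference equation (κ(p) − κ(y) + y²p²/x²)·a_p(x,y) + (yp/x)·√(1+κ(q⁻¹p))·a_{q⁻¹p}(x,y) + q·(yp/x)·√(1+κ(p))·a_{qp}(x,y) = 0 (with the convention a_p(x,y) = 0 when an argument or subscript lies outside I_q). -/

import Mathlib

open scoped Classical

noncomputable section

/-- The set `I_q = -q^ℕ ∪ q^ℤ`. -/
def Iq (q : ℝ) : Set ℝ :=
  {x | (∃ k : ℕ, x = -q ^ (k + 1)) ∨ ∃ k : ℤ, x = q ^ k}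

/-- `χ(x) = log_q |x|`, the unique integer `k` with `|x| = q^k` (junk value `0` otherwise). -/
def chi (q x : ℝ) : ℤ :=
  if h : ∃ k : ℤ, |x| = q ^ k then h.choose else 0

/-- `κ(x) = sgn(x)·x²`. -/
def kappa (x : ℝ) : ℝ := Real.sign x * x ^ 2

/-- `ν(t) = q^{(χ(t)-1)(χ(t)-2)/2}`. -/
def nu (q t : ℝ) : ℝ := q ^ ((chi q t - 1) * (chi q t - 2) / 2)

/-- The sign factor `s(x,y)`. -/
def sfac (x y : ℝ) : ℝ := if 0 < x ∧ y < 0 then -1 else 1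

/-- The infinite q-shifted factorial `(a;q)_∞`. -/
def qPoch (a q : ℝ) : ℝ := ∏' k : ℕ, (1 - a * q ^ k)

/-- The finite q-shifted factorial `(a;q)_n`. -/
def qPochN (a q : ℝ) (n : ℕ) : ℝ := ∏ k ∈ Finset.range n, (1 - a * q ^ k)

/-- `Ψ(a;b;q,z) = Σ_{n≥0} ((a;q)_n (b q^n;q)_∞/(q;q)_n)·(-1)^n q^{n(n-1)/2} z^n`. -/
def Psi (a b q z : ℝ) : ℝ :=
  ∑' n : ℕ, qPochN a q n * qPoch (b * q ^ n) q / qPochN q q n *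
    ((-1) ^ n * q ^ (n * (n - 1) / 2) * z ^ n)

/-- The normalization constant `c_q`. -/
def cq (q : ℝ) : ℝ :=
  (Real.sqrt 2 * q * (qPoch (q ^ 2) (q ^ 2) * qPoch (-q ^ 2) (q ^ 2)))⁻¹

/-- The functions `a_p(x,y)`, with the convention that `a_p(x,y) = 0` whenever an
argument or the subscript lies outside `I_q`, or when `sgn(xy) ≠ sgn(p)`. -/
def ap (q p x y : ℝ) : ℝ :=
  if p ∈ Iq q ∧ x ∈ Iq q ∧ y ∈ Iq q ∧ Real.sign (x * y) = Real.sign p then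
    cq q * sfac x y * (-1 : ℝ) ^ chi q p * (-Real.sign y) ^ chi q x * |y| *
      nu q (p * y / x) *
      Real.sqrt (qPoch (-kappa p) (q ^ 2) * qPoch (-kappa y) (q ^ 2) /
        qPoch (-kappa x) (q ^ 2)) *
      Psi (-q ^ 2 / kappa y) (q ^ 2 * kappa (x / y)) (q ^ 2) (q ^ 2 * kappa (x / p))
  else 0

end

noncomputable section

def cPsi (a b Q : ℝ) (n : ℕ) : ℝ :=
  qPochN a Q n * qPoch (b * Q ^ n) Q / qPochN Q Q n * ((-1) ^ n * Q ^ (n * (n - 1) / 2))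

end

set_option maxHeartbeats 1000000

noncomputable section QAux
open Real Finset


lemma abs_log_one_sub_le {t : ℝ} (h : |t| ≤ 1/2) : |Real.log (1 - t)| ≤ 2 * |t| := by
  obtain ⟨hl, hr⟩ := abs_le.1 h
  have h1 : (0:ℝ) < 1 - t := by linarith
  rcases le_or_gt t 0 with ht | ht
  · have h2 : Real.log (1 - t) ≤ 1 - t - 1 := Real.log_le_sub_one_of_pos h1
    have h3 : 0 ≤ Real.log (1 - t) := Real.log_nonneg (by linarith)
    rw [abs_of_nonneg h3, abs_of_nonpos ht]; linarith
  · have h4 : Real.log (1 - t) ≤ 0 := Real.log_nonpos (by linarith) (by linarith)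
    have h5 : Real.log (1-t)⁻¹ ≤ (1-t)⁻¹ - 1 := Real.log_le_sub_one_of_pos (by positivity)
    rw [Real.log_inv] at h5
    have h7 : (1-t)⁻¹ - 1 ≤ 2*t := by
      rw [inv_eq_one_div, div_sub' h1.ne', div_le_iff₀ h1]
      nlinarith
    rw [abs_of_nonpos h4, abs_of_pos ht]; linarith

lemma nat_tri (n : ℕ) : (n + 1) * n / 2 = n * (n - 1) / 2 + n := by
  have h : (n + 1) * n = n * (n - 1) + n * 2 := by
    cases n with
    | zero => rfl
    | succ m => simp [Nat.succ_sub_one]; ring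
  rw [h, Nat.add_mul_div_right _ _ (by norm_num : 0 < 2)]

lemma weierstrass {g : ℕ → ℝ} (s : Finset ℕ) (h0 : ∀ k ∈ s, 0 ≤ g k) (h1 : ∀ k ∈ s, g k ≤ 1) :
    1 - ∑ k ∈ s, g k ≤ ∏ k ∈ s, (1 - g k) := by
  induction s using Finset.cons_induction with
  | empty => simp
  | cons i s hi ih =>
    rw [Finset.prod_cons, Finset.sum_cons]
    have hs := ih (fun k hk => h0 k (Finset.mem_cons_of_mem hk))
      (fun k hk => h1 k (Finset.mem_cons_of_mem hk))
    have hgi0 := h0 i (Finset.mem_cons_self i s)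
    have hgi1 := h1 i (Finset.mem_cons_self i s)
    have hsum0 : 0 ≤ ∑ k ∈ s, g k :=
      Finset.sum_nonneg (fun k hk => h0 k (Finset.mem_cons_of_mem hk))
    nlinarith [hs]

variable {Q : ℝ} (hQ0 : 0 < Q) (hQ1 : Q < 1)
include hQ0 hQ1

lemma summable_geom_c (c : ℝ) : Summable (fun k : ℕ => c * Q ^ k) :=
  (summable_geometric_of_lt_one hQ0.le hQ1).mul_left c

lemma tsum_geom_c (c : ℝ) : ∑' k : ℕ, c * Q ^ k = c * (1 - Q)⁻¹ := by
  rw [tsum_mul_left, tsum_geometric_of_lt_one hQ0.le hQ1]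

lemma small_factor_pos {a : ℝ} (ha : |a| ≤ 1/2) (k : ℕ) : (0:ℝ) < 1 - a * Q ^ k := by
  have h1 : |a * Q ^ k| ≤ 1/2 := by
    rw [abs_mul, abs_of_nonneg (pow_nonneg hQ0.le k)]
    calc |a| * Q ^ k ≤ |a| * 1 := by
          exact mul_le_mul_of_nonneg_left (pow_le_one₀ hQ0.le hQ1.le) (abs_nonneg a)
      _ ≤ 1/2 := by rwa [mul_one]
  have := (abs_le.1 h1).2; linarith

lemma summable_log_small {a : ℝ} (ha : |a| ≤ 1/2) :
    Summable fun k : ℕ => Real.log (1 - a * Q ^ k) := by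
  refine Summable.of_norm_bounded (g := fun k => 2 * |a| * Q ^ k)
    (by simpa [mul_assoc] using (summable_geom_c hQ0 hQ1 (2 * |a|))) (fun k => ?_)
  have h1 : |a * Q ^ k| ≤ 1/2 := by
    rw [abs_mul, abs_of_nonneg (pow_nonneg hQ0.le k)]
    calc |a| * Q ^ k ≤ |a| * 1 :=
          mul_le_mul_of_nonneg_left (pow_le_one₀ hQ0.le hQ1.le) (abs_nonneg a)
      _ ≤ 1/2 := by rwa [mul_one]
  calc ‖Real.log (1 - a * Q ^ k)‖ ≤ 2 * |a * Q ^ k| := abs_log_one_sub_le h1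
    _ = 2 * |a| * Q ^ k := by
        rw [abs_mul, abs_of_nonneg (pow_nonneg hQ0.le k), mul_assoc]

lemma hasProd_small {a : ℝ} (ha : |a| ≤ 1/2) :
    HasProd (fun k : ℕ => 1 - a * Q ^ k)
      (Real.exp (∑' k : ℕ, Real.log (1 - a * Q ^ k))) := by
  have h := (summable_log_small hQ0 hQ1 ha).hasSum.rexp
  have he : (Real.exp ∘ fun k : ℕ => Real.log (1 - a * Q ^ k)) = fun k => 1 - a * Q ^ k :=
    funext fun k => Real.exp_log (small_factor_pos hQ0 hQ1 ha k)
  rwa [he] at h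

lemma qPoch_small_eq {a : ℝ} (ha : |a| ≤ 1/2) :
    qPoch a Q = Real.exp (∑' k : ℕ, Real.log (1 - a * Q ^ k)) :=
  (hasProd_small hQ0 hQ1 ha).tprod_eq

lemma qPoch_small_pos {a : ℝ} (ha : |a| ≤ 1/2) : 0 < qPoch a Q := by
  rw [qPoch_small_eq hQ0 hQ1 ha]; exact Real.exp_pos _

lemma qPoch_small_le {a : ℝ} (ha : |a| ≤ 1/2) : qPoch a Q ≤ Real.exp ((1-Q)⁻¹) := by
  rw [qPoch_small_eq hQ0 hQ1 ha]
  apply Real.exp_le_exp.2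
  have h1 : ∑' k : ℕ, Real.log (1 - a * Q ^ k) ≤ ∑' k : ℕ, 2 * |a| * Q ^ k := by
    refine Summable.tsum_le_tsum (fun k => ?_) (summable_log_small hQ0 hQ1 ha)
      (by simpa [mul_assoc] using (summable_geom_c hQ0 hQ1 (2 * |a|)))
    have h2 : |a * Q ^ k| ≤ 1/2 := by
      rw [abs_mul, abs_of_nonneg (pow_nonneg hQ0.le k)]
      calc |a| * Q ^ k ≤ |a| * 1 :=
            mul_le_mul_of_nonneg_left (pow_le_one₀ hQ0.le hQ1.le) (abs_nonneg a)
        _ ≤ 1/2 := by rwa [mul_one]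
    have h3 := abs_log_one_sub_le h2
    have h4 := (abs_le.1 h3).2
    calc Real.log (1 - a * Q ^ k) ≤ |Real.log (1 - a * Q ^ k)| := le_abs_self _
      _ ≤ 2 * |a * Q ^ k| := h3
      _ = 2 * |a| * Q ^ k := by
          rw [abs_mul, abs_of_nonneg (pow_nonneg hQ0.le k), mul_assoc]
  rw [tsum_geom_c hQ0 hQ1] at h1
  have h5 : 2 * |a| * (1-Q)⁻¹ ≤ (1-Q)⁻¹ := by
    have h0 : (0:ℝ) < 1 - Q := by linarith
    have h6 : (0:ℝ) ≤ (1-Q)⁻¹ := by positivity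
    nlinarith [abs_nonneg a]
  linarith

lemma exists_small (a : ℝ) : ∃ N : ℕ, |a| * Q ^ N ≤ 1/2 := by
  have h : Filter.Tendsto (fun n : ℕ => |a| * Q ^ n) Filter.atTop (nhds (|a| * 0)) :=
    (tendsto_pow_atTop_nhds_zero_of_lt_one hQ0.le hQ1).const_mul |a|
  rw [mul_zero] at h
  exact (h.eventually_le_const (by norm_num)).exists

lemma multipliable_qPoch (a : ℝ) : Multipliable (fun k : ℕ => 1 - a * Q ^ k) := by
  obtain ⟨N, hN⟩ := exists_small hQ0 hQ1 a
  have habs : |a * Q ^ N| ≤ 1/2 := by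
    rwa [abs_mul, abs_of_nonneg (pow_nonneg hQ0.le N)]
  have tail : Multipliable (fun k : ℕ => 1 - (a * Q ^ N) * Q ^ k) :=
    ⟨_, hasProd_small hQ0 hQ1 habs⟩
  have tail' : Multipliable (fun k : ℕ => 1 - a * Q ^ (k + N)) := by
    refine tail.congr (fun k => ?_)
    rw [pow_add]; ring
  exact ⟨_, tail'.hasProd.prod_range_mul⟩

lemma qPoch_succ (a : ℝ) : qPoch a Q = (1 - a) * qPoch (a * Q) Q := by
  have h : Multipliable (fun k : ℕ => 1 - a * Q ^ (k + 1)) := by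
    refine (multipliable_qPoch hQ0 hQ1 (a * Q)).congr (fun k => ?_)
    rw [pow_succ']; ring
  rw [qPoch, tprod_eq_zero_mul' h, pow_zero, mul_one]
  congr 1
  rw [qPoch]
  exact tprod_congr (fun k => by rw [pow_succ']; ring)

lemma qPoch_split (a : ℝ) (N : ℕ) :
    qPoch a Q = qPochN a Q N * qPoch (a * Q ^ N) Q := by
  have tail : Multipliable (fun k : ℕ => 1 - (a * Q ^ N) * Q ^ k) :=
    multipliable_qPoch hQ0 hQ1 _
  have tail' : Multipliable (fun k : ℕ => 1 - a * Q ^ (k + N)) := by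
    refine tail.congr (fun k => ?_); rw [pow_add]; ring
  have h := Multipliable.prod_mul_tprod_nat_mul' (f := fun k : ℕ => 1 - a * Q ^ k) (k := N) tail'
  rw [qPoch, ← h, qPochN]
  congr 1
  rw [qPoch]
  exact tprod_congr (fun k => by
    show 1 - a * Q ^ (k + N) = 1 - a * Q ^ N * Q ^ k
    rw [pow_add]; ring)

lemma qPoch_pos {a : ℝ} (hpos : ∀ k : ℕ, (0:ℝ) < 1 - a * Q ^ k) : 0 < qPoch a Q := by
  obtain ⟨N, hN⟩ := exists_small hQ0 hQ1 a
  have habs : |a * Q ^ N| ≤ 1/2 := by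
    rwa [abs_mul, abs_of_nonneg (pow_nonneg hQ0.le N)]
  rw [qPoch_split hQ0 hQ1 a N]
  have h1 : 0 < qPochN a Q N := Finset.prod_pos (fun k _ => hpos k)
  exact mul_pos h1 (qPoch_small_pos hQ0 hQ1 habs)


open Real Finset




lemma qPochN_abs_le (a : ℝ) (n : ℕ) : |qPochN a Q n| ≤ Real.exp (|a| * (1 - Q)⁻¹) := by
  rw [qPochN, Finset.abs_prod]
  have step1 : ∀ k ∈ range n, |1 - a * Q ^ k| ≤ Real.exp (|a| * Q ^ k) := by
    intro k _
    have h1 : |1 - a * Q ^ k| ≤ 1 + |a| * Q ^ k := by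
      rw [sub_eq_add_neg]
      refine (abs_add_le _ _).trans ?_
      rw [abs_one, abs_neg, abs_mul, abs_of_nonneg (pow_nonneg hQ0.le k)]
    have h2 := Real.add_one_le_exp (|a| * Q ^ k)
    linarith
  refine (Finset.prod_le_prod (fun k _ => abs_nonneg _) step1).trans ?_
  rw [← Real.exp_sum]
  apply Real.exp_le_exp.2
  have h3 : ∑ k ∈ range n, |a| * Q ^ k ≤ ∑' k : ℕ, |a| * Q ^ k := by
    refine Summable.sum_le_tsum _ (fun k _ => by positivity) ?_
    exact (summable_geometric_of_lt_one hQ0.le hQ1).mul_left _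
  rwa [tsum_mul_left, tsum_geometric_of_lt_one hQ0.le hQ1] at h3

lemma qPochN_Q_factor_pos (k : ℕ) : (0:ℝ) < 1 - Q * Q ^ k := by
  have h1 : Q * Q ^ k < 1 := by
    calc Q * Q ^ k ≤ Q * 1 := by
          exact mul_le_mul_of_nonneg_left (pow_le_one₀ hQ0.le hQ1.le) hQ0.le
      _ < 1 := by rwa [mul_one]
  linarith

lemma qPochN_Q_pos (n : ℕ) : 0 < qPochN Q Q n :=
  Finset.prod_pos (fun k _ => qPochN_Q_factor_pos hQ0 hQ1 k)

lemma qPochN_Q_lower : ∃ c : ℝ, 0 < c ∧ ∀ n : ℕ, c ≤ qPochN Q Q n := by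
  obtain ⟨N, hN⟩ : ∃ N : ℕ, |Q * (1 - Q)⁻¹| * Q ^ N ≤ 1/2 := by
    have h : Filter.Tendsto (fun n : ℕ => |Q * (1 - Q)⁻¹| * Q ^ n) Filter.atTop
        (nhds (|Q * (1 - Q)⁻¹| * 0)) :=
      (tendsto_pow_atTop_nhds_zero_of_lt_one hQ0.le hQ1).const_mul _
    rw [mul_zero] at h
    exact (h.eventually_le_const (by norm_num)).exists
  have hQQ : (0:ℝ) < 1 - Q := by linarith
  rw [abs_of_nonneg (by positivity)] at hN
  refine ⟨qPochN Q Q N * (1/2), mul_pos (qPochN_Q_pos hQ0 hQ1 N) (by norm_num), fun n => ?_⟩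
  rcases le_or_gt n N with h | h
  · have h1 : qPochN Q Q N ≤ qPochN Q Q n := by
      rw [qPochN, qPochN, ← Finset.prod_range_mul_prod_Ico _ h]
      have h2 : ∏ k ∈ Finset.Ico n N, (1 - Q * Q ^ k) ≤ 1 := by
        refine Finset.prod_le_one (fun k _ => (qPochN_Q_factor_pos hQ0 hQ1 k).le) ?_
        intro k _
        have : 0 < Q * Q ^ k := by positivity
        linarith
      have h3 : (0:ℝ) < ∏ k ∈ range n, (1 - Q * Q ^ k) :=
        Finset.prod_pos (fun k _ => qPochN_Q_factor_pos hQ0 hQ1 k)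
      nlinarith [h3, h2]
    nlinarith [qPochN_Q_pos hQ0 hQ1 N]
  · have hNn : N ≤ n := h.le
    simp only [qPochN]
    rw [← Finset.prod_range_mul_prod_Ico (fun k => 1 - Q * Q ^ k) hNn]
    have hsum : ∑ k ∈ Finset.Ico N n, Q * Q ^ k ≤ 1/2 := by
      have h1 : ∑ k ∈ Finset.Ico N n, Q * Q ^ k = Q * ∑ j ∈ range (n - N), Q ^ N * Q ^ j := by
        rw [Finset.sum_Ico_eq_sum_range, Finset.mul_sum]
        exact Finset.sum_congr rfl (fun j _ => by ring)
      rw [h1]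
      have h2 : ∑ j ∈ range (n - N), Q ^ N * Q ^ j ≤ Q ^ N * (1 - Q)⁻¹ := by
        have h3 : ∑ j ∈ range (n-N), Q ^ N * Q ^ j ≤ ∑' j : ℕ, Q ^ N * Q ^ j := by
          refine Summable.sum_le_tsum _ (fun k _ => by positivity) ?_
          exact (summable_geometric_of_lt_one hQ0.le hQ1).mul_left _
        rwa [tsum_mul_left, tsum_geometric_of_lt_one hQ0.le hQ1] at h3
      calc Q * ∑ j ∈ range (n - N), Q ^ N * Q ^ j ≤ Q * (Q ^ N * (1-Q)⁻¹) :=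
            mul_le_mul_of_nonneg_left h2 hQ0.le
        _ = Q * (1-Q)⁻¹ * Q ^ N := by ring
        _ ≤ 1/2 := hN
    have hW := weierstrass (g := fun k => Q * Q ^ k) (Finset.Ico N n)
      (fun k _ => by positivity) (fun k _ => by
        have := qPochN_Q_factor_pos hQ0 hQ1 k
        show Q * Q ^ k ≤ 1
        linarith)
    have h4 : (1:ℝ)/2 ≤ ∏ k ∈ Finset.Ico N n, (1 - Q * Q ^ k) := by
      refine le_trans ?_ hW
      linarith
    have h5 := qPochN_Q_pos hQ0 hQ1 N
    calc qPochN Q Q N * (1/2) ≤ qPochN Q Q N * ∏ k ∈ Finset.Ico N n, (1 - Q * Q ^ k) :=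
          mul_le_mul_of_nonneg_left h4 h5.le


lemma qPoch_factor_small {b : ℝ} {N1 n : ℕ} (hn : N1 ≤ n) (hN1 : |b| * Q ^ N1 ≤ 1/2) :
    |b * Q ^ n| ≤ 1/2 := by
  rw [abs_mul, abs_of_nonneg (pow_nonneg hQ0.le n)]
  calc |b| * Q ^ n ≤ |b| * Q ^ N1 := by
        exact mul_le_mul_of_nonneg_left (pow_le_pow_of_le_one hQ0.le hQ1.le hn) (abs_nonneg b)
    _ ≤ 1/2 := hN1

lemma summable_psi_term (a b z : ℝ) :
    Summable (fun n : ℕ => qPochN a Q n * qPoch (b * Q ^ n) Q / qPochN Q Q n *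
      ((-1:ℝ) ^ n * Q ^ (n * (n - 1) / 2) * z ^ n)) := by
  obtain ⟨c, hc, hcn⟩ := qPochN_Q_lower hQ0 hQ1
  obtain ⟨N1, hN1⟩ := exists_small hQ0 hQ1 b
  set K : ℝ := Real.exp (|a| * (1 - Q)⁻¹) * Real.exp ((1-Q)⁻¹) / c with hK
  have hK0 : 0 < K := by positivity
  set g : ℕ → ℝ := fun n => K * ∏ j ∈ Finset.range n, (Q ^ j * |z|) with hg
  have hgs : Summable g := by
    obtain ⟨N2, hN2⟩ := exists_small hQ0 hQ1 z
    refine summable_of_ratio_norm_eventually_le (r := 1/2) (by norm_num) ?_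
    filter_upwards [Filter.eventually_ge_atTop N2] with n hn
    have hstep : g (n + 1) = g n * (Q ^ n * |z|) := by
      rw [hg]; simp only [Finset.prod_range_succ]; ring
    rw [hstep, norm_mul]
    have h1 : ‖Q ^ n * |z|‖ ≤ 1/2 := by
      rw [Real.norm_eq_abs, abs_of_nonneg (by positivity)]
      calc Q ^ n * |z| ≤ Q ^ N2 * |z| := by
            exact mul_le_mul_of_nonneg_right
              (pow_le_pow_of_le_one hQ0.le hQ1.le hn) (abs_nonneg z)
        _ ≤ 1/2 := by rw [mul_comm]; exact hN2
    calc ‖g n‖ * ‖Q ^ n * |z|‖ ≤ ‖g n‖ * (1/2) := by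
          exact mul_le_mul_of_nonneg_left h1 (norm_nonneg _)
      _ = 1/2 * ‖g n‖ := by ring
  refine Summable.of_norm_bounded_eventually_nat hgs ?_
  filter_upwards [Filter.eventually_ge_atTop N1] with n hn
  have hsmall : |b * Q ^ n| ≤ 1/2 := qPoch_factor_small hQ0 hQ1 hn hN1
  have hP1 : |qPoch (b * Q ^ n) Q| ≤ Real.exp ((1-Q)⁻¹) := by
    rw [abs_of_pos (qPoch_small_pos hQ0 hQ1 hsmall)]
    exact qPoch_small_le hQ0 hQ1 hsmall
  have hD : c ≤ |qPochN Q Q n| := by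
    rw [abs_of_pos (qPochN_Q_pos hQ0 hQ1 n)]; exact hcn n
  have hprod : ∏ j ∈ Finset.range n, (Q ^ j * |z|) = Q ^ (n * (n-1) / 2) * |z| ^ n := by
    rw [Finset.prod_mul_distrib, Finset.prod_const, Finset.prod_pow_eq_pow_sum,
      Finset.sum_range_id, Finset.card_range]
  have hA := qPochN_abs_le hQ0 hQ1 a n
  have hDpos := qPochN_Q_pos hQ0 hQ1 n
  rw [norm_mul, norm_div, norm_mul]
  rw [hg]
  simp only [norm_mul, Real.norm_eq_abs, abs_pow, abs_neg, abs_one, one_pow,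
    abs_abs]
  rw [hprod]
  rw [abs_of_pos hQ0]
  have hfrac : |qPochN a Q n| * |qPoch (b * Q ^ n) Q| / |qPochN Q Q n| ≤ K := by
    rw [hK, div_le_div_iff₀ (by positivity) hc]
    have h2 : |qPochN a Q n| * |qPoch (b * Q ^ n) Q| * c ≤
        Real.exp (|a| * (1 - Q)⁻¹) * Real.exp ((1-Q)⁻¹) * |qPochN Q Q n| := by
      apply mul_le_mul
      · exact mul_le_mul hA hP1 (abs_nonneg _) (Real.exp_pos _).le
      · exact hD
      · exact hc.le
      · positivity
    linarith
  calc |qPochN a Q n| * |qPoch (b * Q ^ n) Q| / |qPochN Q Q n| *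
        (1 * Q ^ (n * (n-1)/2) * |z| ^ n)

      ≤ K * (1 * Q ^ (n * (n-1)/2) * |z| ^ n) := by
        apply mul_le_mul_of_nonneg_right hfrac (by positivity)
    _ = K * (Q ^ (n * (n-1)/2) * |z| ^ n) := by ring

lemma summable_cPsi (a b z : ℝ) : Summable (fun n : ℕ => cPsi a b Q n * z ^ n) :=
  (summable_psi_term hQ0 hQ1 a b z).congr (fun n => by rw [cPsi]; ring)

omit hQ0 hQ1 in
lemma Psi_eq_cPsi (a b z : ℝ) : Psi a b Q z = ∑' n : ℕ, cPsi a b Q n * z ^ n :=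
  tsum_congr (fun n => by rw [cPsi]; ring)

lemma cPsi_key (a b z : ℝ) (n : ℕ) :
    (Q + b) * (cPsi a b Q (n+1) * z ^ (n+1)) - b * (cPsi a b Q (n+1) * (Q*z) ^ (n+1))
      - Q * (cPsi a b Q (n+1) * (z/Q) ^ (n+1))
    = -(a * z * (cPsi a b Q n * (Q*z) ^ n) - z * (cPsi a b Q n * z ^ n)) := by
  have e1 : qPochN a Q (n+1) = qPochN a Q n * (1 - a * Q ^ n) := Finset.prod_range_succ _ n
  have e2 : qPochN Q Q (n+1) = qPochN Q Q n * (1 - Q * Q ^ n) := Finset.prod_range_succ _ n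
  have e3 : qPoch (b * Q ^ n) Q = (1 - b * Q ^ n) * qPoch (b * Q ^ (n+1)) Q := by
    have h := qPoch_succ hQ0 hQ1 (b * Q ^ n)
    rwa [mul_assoc, ← pow_succ] at h
  have e4 : Q ^ ((n+1) * ((n+1)-1) / 2) = Q ^ (n * (n-1) / 2) * Q ^ n := by
    rw [← pow_add, Nat.add_sub_cancel, nat_tri]
  have hD : qPochN Q Q n ≠ 0 := (qPochN_Q_pos hQ0 hQ1 n).ne'
  have hD2 : (1 : ℝ) - Q * Q ^ n ≠ 0 := (qPochN_Q_factor_pos hQ0 hQ1 n).ne'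
  have hQne : Q ≠ 0 := hQ0.ne'
  simp only [cPsi, e1, e2, e3, e4, div_pow]
  field_simp
  ring

lemma psi_rec (a b z : ℝ) :
    (Q + b - z) * Psi a b Q z + (a * z - b) * Psi a b Q (Q * z) - Q * Psi a b Q (z / Q) = 0 := by
  have hSz := summable_cPsi hQ0 hQ1 a b z
  have hSQz := summable_cPsi hQ0 hQ1 a b (Q * z)
  have hSzQ := summable_cPsi hQ0 hQ1 a b (z / Q)
  set F : ℕ → ℝ := fun n => (Q + b) * (cPsi a b Q n * z ^ n) - b * (cPsi a b Q n * (Q*z) ^ n)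
    - Q * (cPsi a b Q n * (z/Q) ^ n) with hF
  set G : ℕ → ℝ := fun n => a * z * (cPsi a b Q n * (Q*z) ^ n) - z * (cPsi a b Q n * z ^ n)
    with hG
  have hSF : Summable F := ((hSz.mul_left _).sub (hSQz.mul_left _)).sub (hSzQ.mul_left _)
  have hSG : Summable G := ((hSQz.mul_left _).sub (hSz.mul_left _))
  rw [Psi_eq_cPsi, Psi_eq_cPsi, Psi_eq_cPsi,
    ← tsum_mul_left, ← tsum_mul_left, ← tsum_mul_left,
    ← Summable.tsum_add ((hSz.mul_left _)) ((hSQz.mul_left _)),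
    ← Summable.tsum_sub ((hSz.mul_left _).add (hSQz.mul_left _)) (hSzQ.mul_left _)]
  have hcongr : ∀ n : ℕ, (Q + b - z) * (cPsi a b Q n * z ^ n)
      + (a * z - b) * (cPsi a b Q n * (Q*z) ^ n)
      - Q * (cPsi a b Q n * (z/Q) ^ n) = F n + G n := by
    intro n; rw [hF, hG]; ring
  rw [tsum_congr hcongr, Summable.tsum_add hSF hSG, Summable.tsum_eq_zero_add hSF]
  have hF0 : F 0 = 0 := by rw [hF]; simp only [pow_zero]; ring
  have hFs : ∀ n : ℕ, F (n + 1) = - G n := fun n => cPsi_key hQ0 hQ1 a b z n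
  rw [hF0, tsum_congr hFs, tsum_neg]
  ring

end QAux

section IqAux
open Real

variable {q : ℝ} (hq0 : 0 < q) (hq1 : q < 1)
include hq0 hq1

lemma chi_eval {x : ℝ} (k : ℤ) (h : |x| = q ^ k) : chi q x = k := by
  have hex : ∃ j : ℤ, |x| = q ^ j := ⟨k, h⟩
  rw [chi, dif_pos hex]
  have hs := hex.choose_spec
  have h2 : q ^ hex.choose = q ^ k := by rw [← hs, h]
  exact zpow_right_injective₀ hq0 hq1.ne h2

omit hq0 hq1 in
lemma pm_sq {σ : ℝ} (hσ : σ = 1 ∨ σ = -1) : σ * σ = 1 := by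
  rcases hσ with h | h <;> rw [h] <;> norm_num

omit hq1 in
lemma abs_pm {σ : ℝ} (hσ : σ = 1 ∨ σ = -1) (u : ℤ) : |σ * q ^ u| = q ^ u := by
  rw [abs_mul, abs_of_pos (zpow_pos hq0 u)]
  rcases hσ with h | h <;> rw [h] <;> norm_num

lemma chi_pm {σ : ℝ} (hσ : σ = 1 ∨ σ = -1) (u : ℤ) : chi q (σ * q ^ u) = u :=
  chi_eval hq0 hq1 u (abs_pm hq0 hσ u)

omit hq1 in
lemma sign_pm {σ : ℝ} (hσ : σ = 1 ∨ σ = -1) (u : ℤ) : Real.sign (σ * q ^ u) = σ := by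
  rcases hσ with h | h <;> subst h
  · rw [one_mul, Real.sign_of_pos (zpow_pos hq0 u)]
  · rw [Real.sign_of_neg (by nlinarith [zpow_pos hq0 u])]

omit hq1 in
lemma kappa_pm {σ : ℝ} (hσ : σ = 1 ∨ σ = -1) (u : ℤ) :
    kappa (σ * q ^ u) = σ * q ^ (2 * u) := by
  have h2 : (q ^ u) ^ (2:ℕ) = q ^ (2*u) := by
    rw [← zpow_natCast (q ^ u) 2, ← zpow_mul, mul_comm]
    norm_num
  rw [kappa, sign_pm hq0 hσ, mul_pow, h2]
  rcases hσ with h | h <;> rw [h] <;> ring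

omit hq1 in
lemma pm_mul {σ τ : ℝ} (u v : ℤ) :
    (σ * q ^ u) * (τ * q ^ v) = (σ * τ) * q ^ (u + v) := by
  rw [zpow_add₀ hq0.ne']; ring

omit hq1 in
lemma pm_div {σ τ : ℝ} (hτ : τ = 1 ∨ τ = -1) (u v : ℤ) :
    (σ * q ^ u) / (τ * q ^ v) = (σ * τ) * q ^ (u - v) := by
  have h := zpow_pos hq0 v
  rw [zpow_sub₀ hq0.ne']
  rcases hτ with h1 | h1 <;> subst h1 <;> field_simp

omit hq0 hq1 in
lemma mem_Iq_pm {σ : ℝ} {u : ℤ} (hσ : σ = 1 ∨ (σ = -1 ∧ 1 ≤ u)) : σ * q ^ u ∈ Iq q := by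
  rcases hσ with h | ⟨h, hu⟩
  · right; exact ⟨u, by rw [h, one_mul]⟩
  · left
    refine ⟨(u - 1).toNat, ?_⟩
    have h2 : (((u-1).toNat : ℤ) + 1) = u := by omega
    rw [h, ← zpow_natCast q ((u-1).toNat + 1)]
    push_cast
    rw [h2]
    ring

omit hq0 hq1 in
lemma Iq_decomp {x : ℝ} (hx : x ∈ Iq q) :
    ∃ (σ : ℝ) (u : ℤ), x = σ * q ^ u ∧ (σ = 1 ∨ (σ = -1 ∧ 1 ≤ u)) := by
  rcases hx with ⟨k, hk⟩ | ⟨k, hk⟩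
  · refine ⟨-1, (k:ℤ)+1, ?_, Or.inr ⟨rfl, by omega⟩⟩
    rw [hk, ← zpow_natCast q (k+1)]
    push_cast
    ring
  · exact ⟨1, k, by rw [hk, one_mul], Or.inl rfl⟩

lemma neg_one_not_mem : (-1 : ℝ) ∉ Iq q := by
  rintro (⟨k, hk⟩ | ⟨k, hk⟩)
  · have h1 : q ^ (k+1) < 1 := pow_lt_one₀ hq0.le hq1 (Nat.succ_ne_zero k)
    have h2 : q ^ (k+1) = 1 := by linarith [hk.symm]
    linarith
  · have := zpow_pos hq0 k
    rw [← hk] at this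
    linarith

omit hq0 hq1 in
lemma q2_zpow : (q:ℝ) ^ (2:ℕ) = q ^ ((2:ℤ)) := by exact_mod_cast (zpow_natCast q 2).symm

lemma ap_eval {σ τ ε : ℝ} {u v m : ℤ}
    (hσ : σ = 1 ∨ σ = -1) (hτ : τ = 1 ∨ τ = -1) (hε : ε = 1 ∨ ε = -1)
    (hxm : σ * q ^ u ∈ Iq q) (hym : τ * q ^ v ∈ Iq q) (hpm : ε * q ^ m ∈ Iq q)
    (hsgn : σ * τ = ε) :
    ap q (ε * q ^ m) (σ * q ^ u) (τ * q ^ v)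
      = cq q * sfac (σ * q ^ u) (τ * q ^ v) * (-1 : ℝ) ^ m * (-τ) ^ u * q ^ v *
        q ^ ((m + v - u - 1) * (m + v - u - 2) / 2) *
        Real.sqrt (qPoch (-(ε * q ^ (2*m))) (q ^ 2) * qPoch (-(τ * q ^ (2*v))) (q ^ 2) /
          qPoch (-(σ * q ^ (2*u))) (q ^ 2)) *
        Psi (-(τ * q ^ (2 - 2*v))) (σ * τ * q ^ (2 + 2*u - 2*v)) (q ^ 2)
          (σ * ε * q ^ (2 + 2*u - 2*m)) := by
  have hqne : q ≠ 0 := hq0.ne'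
  have hστ : σ * τ = 1 ∨ σ * τ = -1 := by
    rcases hσ with h|h <;> rcases hτ with h'|h' <;> subst h <;> subst h' <;> norm_num
  have hσε : σ * ε = 1 ∨ σ * ε = -1 := by
    rcases hσ with h|h <;> rcases hε with h'|h' <;> subst h <;> subst h' <;> norm_num
  have hετσ : ε * τ * σ = 1 ∨ ε * τ * σ = -1 := by
    rcases hσ with h|h <;> rcases hτ with h'|h' <;> rcases hε with h''|h'' <;>
      subst h <;> subst h' <;> subst h'' <;> norm_num
  have hcond : Real.sign ((σ * q ^ u) * (τ * q ^ v)) = Real.sign (ε * q ^ m) := by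
    rw [pm_mul hq0, sign_pm hq0 hστ, sign_pm hq0 hε, hsgn]
  rw [ap, if_pos ⟨hpm, hxm, hym, hcond⟩]
  rw [chi_pm hq0 hq1 hε m, chi_pm hq0 hq1 hσ u, sign_pm hq0 hτ v, abs_pm hq0 hτ v]
  have hpyx : (ε * q ^ m) * (τ * q ^ v) / (σ * q ^ u) = (ε * τ) * σ * q ^ (m + v - u) := by
    rw [pm_mul hq0, pm_div hq0 hσ]
  rw [hpyx, nu]
  have hchig : chi q (ε * τ * σ * q ^ (m + v - u)) = m + v - u := chi_pm hq0 hq1 hετσ _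
  rw [hchig]
  rw [kappa_pm hq0 hε m, kappa_pm hq0 hτ v, kappa_pm hq0 hσ u]
  have hxdy : (σ * q ^ u) / (τ * q ^ v) = (σ * τ) * q ^ (u - v) := pm_div hq0 hτ u v
  have hxdp : (σ * q ^ u) / (ε * q ^ m) = (σ * ε) * q ^ (u - m) := pm_div hq0 hε u m
  rw [hxdy, hxdp, kappa_pm hq0 hστ, kappa_pm hq0 hσε]
  have ha : -q ^ (2:ℕ) / (τ * q ^ (2*v)) = -(τ * q ^ (2 - 2*v)) := by
    rw [neg_div, q2_zpow]
    have h2 := pm_div (σ := (1:ℝ)) hq0 hτ 2 (2*v)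
    rw [one_mul, one_mul] at h2
    rw [h2]
  have hb : q ^ (2:ℕ) * (σ * τ * q ^ (2*(u - v))) = σ * τ * q ^ (2 + 2*u - 2*v) := by
    rw [q2_zpow, show (2:ℤ)*(u-v) = 2*u-2*v by ring,
      show (2:ℤ) + 2*u - 2*v = 2 + (2*u - 2*v) by ring, zpow_add₀ hqne]
    ring
  have hz : q ^ (2:ℕ) * (σ * ε * q ^ (2*(u - m))) = σ * ε * q ^ (2 + 2*u - 2*m) := by
    rw [q2_zpow, show (2:ℤ)*(u-m) = 2*u-2*m by ring,
      show (2:ℤ) + 2*u - 2*m = 2 + (2*u - 2*m) by ring, zpow_add₀ hqne]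
    ring
  rw [ha, hb, hz]

lemma zpow_le_one_of_nonneg {j : ℤ} (hj : 0 ≤ j) : q ^ j ≤ 1 :=
  zpow_le_one₀ hq0 hq1.le hj

lemma one_add_kfactor_pos {ε : ℝ} {j : ℤ} (hε : ε = 1 ∨ (ε = -1 ∧ 2 ≤ j)) (k : ℕ) :
    (0:ℝ) < 1 - (-(ε * q ^ j)) * (q ^ 2) ^ k := by
  rcases hε with h | ⟨h, hj⟩ <;> subst h
  · have h1 : (0:ℝ) < q ^ j := zpow_pos hq0 j
    have h2 : (0:ℝ) < (q^2)^k := by positivity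
    nlinarith
  · have h1 : q ^ j ≤ q ^ (2:ℤ) := by
      apply zpow_le_zpow_right_of_le_one₀ hq0 hq1.le hj
    have h2 : ((q:ℝ)^2)^k ≤ 1 := pow_le_one₀ (by positivity) (by nlinarith)
    have h3 : (0:ℝ) < q ^ j := zpow_pos hq0 j
    have h4 : (0:ℝ) < (q^2)^k := by positivity
    have h5 : q ^ ((2:ℤ)) < 1 := by
      rw [← q2_zpow]
      nlinarith
    have h6 : q ^ j * (q^2) ^ k ≤ q ^ j := mul_le_of_le_one_right h3.le h2
    nlinarith [h6]

lemma qPoch_k_pos {ε : ℝ} {j : ℤ} (hε : ε = 1 ∨ (ε = -1 ∧ 2 ≤ j)) :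
    0 < qPoch (-(ε * q ^ j)) (q ^ 2) :=
  qPoch_pos (by positivity) (by nlinarith) (fun k => one_add_kfactor_pos hq0 hq1 hε k)

lemma qPoch_step (ε : ℝ) (j : ℤ) :
    qPoch (-(ε * q ^ j)) (q ^ 2) = (1 + ε * q ^ j) * qPoch (-(ε * q ^ (j + 2))) (q ^ 2) := by
  have h := qPoch_succ (Q := q^2) (by positivity) (by nlinarith) (-(ε * q ^ j))
  rw [h]
  congr 1
  · ring
  · congr 1
    rw [q2_zpow, zpow_add₀ hq0.ne']
    ring

end IqAux


theorem stmt2 (q : ℝ) (hq0 : 0 < q) (hq1 : q < 1) (x y p : ℝ)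
    (hx : x ∈ Iq q) (hy : y ∈ Iq q) (hp : p ∈ Iq q) :
    (kappa p - kappa y + y ^ 2 * p ^ 2 / x ^ 2) * ap q p x y +
      y * p / x * Real.sqrt (1 + kappa (p / q)) * ap q (p / q) x y +
      q * (y * p / x) * Real.sqrt (1 + kappa p) * ap q (q * p) x y = 0 := by
  have hqne : q ≠ 0 := hq0.ne'
  have hQ0 : (0:ℝ) < q ^ 2 := by positivity
  have hQ1 : q ^ 2 < 1 := by nlinarith
  obtain ⟨σ, u, hxe, hσ'⟩ := Iq_decomp hx
  obtain ⟨τ, v, hye, hτ'⟩ := Iq_decomp hy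
  obtain ⟨ε, m, hpe, hε'⟩ := Iq_decomp hp
  have hσ : σ = 1 ∨ σ = -1 := hσ'.imp id And.left
  have hτ : τ = 1 ∨ τ = -1 := hτ'.imp id And.left
  have hε : ε = 1 ∨ ε = -1 := hε'.imp id And.left
  subst hxe; subst hye; subst hpe
  have hpq : (ε * q ^ m) / q = ε * q ^ (m - 1) := by
    rw [zpow_sub₀ hqne, zpow_one]; ring
  have hqp : q * (ε * q ^ m) = ε * q ^ (m + 1) := by
    rw [zpow_add₀ hqne, zpow_one]; ring
  rw [hpq, hqp]
  by_cases hsgn : σ * τ = ε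
  · -- main case
    have hxm := mem_Iq_pm (q := q) hσ'
    have hym := mem_Iq_pm (q := q) hτ'
    have hpm := mem_Iq_pm (q := q) hε'
    have hpm3 : ε * q ^ (m+1) ∈ Iq q :=
      mem_Iq_pm (hε'.imp id (fun h => ⟨h.1, by omega⟩))
    have hT1 := ap_eval hq0 hq1 hσ hτ hε hxm hym hpm hsgn
    have hT3 := ap_eval (m := m+1) hq0 hq1 hσ hτ hε hxm hym hpm3 hsgn
    have e1 : (0:ℝ) < 1 + ε * q ^ (2*m) := by
      have h := one_add_kfactor_pos hq0 hq1 (j := 2*m)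
        (hε'.imp id (fun h => ⟨h.1, by omega⟩)) 0
      simpa using h
    have e0 : (0:ℝ) ≤ 1 + ε * q ^ (2*m-2) := by
      rcases hε' with h | ⟨h, hm⟩
      · subst h; nlinarith [zpow_pos hq0 (2*m-2)]
      · subst h
        have h2 : q ^ (2*m-2) ≤ 1 := zpow_le_one_of_nonneg hq0 hq1 (by omega)
        nlinarith
    have hs1 : qPoch (-(ε * q ^ (2*m))) (q^2)
        = (1 + ε*q^(2*m)) * qPoch (-(ε*q^(2*m+2))) (q^2) := qPoch_step hq0 hq1 ε (2*m)
    have hs31 : (2:ℤ)*(m+1) = 2*m+2 := by ring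
    rw [hs31] at hT3
    rw [hs1] at hT1
    have hsqrt1 : Real.sqrt ((1 + ε*q^(2*m)) * qPoch (-(ε*q^(2*m+2))) (q^2) *
          qPoch (-(τ*q^(2*v))) (q^2) / qPoch (-(σ*q^(2*u))) (q^2))
        = Real.sqrt (1 + ε*q^(2*m)) * Real.sqrt (qPoch (-(ε*q^(2*m+2))) (q^2) *
          qPoch (-(τ*q^(2*v))) (q^2) / qPoch (-(σ*q^(2*u))) (q^2)) := by
      rw [show (1 + ε*q^(2*m)) * qPoch (-(ε*q^(2*m+2))) (q^2) *
          qPoch (-(τ*q^(2*v))) (q^2) / qPoch (-(σ*q^(2*u))) (q^2)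
          = (1 + ε*q^(2*m)) * (qPoch (-(ε*q^(2*m+2))) (q^2) *
            qPoch (-(τ*q^(2*v))) (q^2) / qPoch (-(σ*q^(2*u))) (q^2)) by ring]
      exact Real.sqrt_mul e1.le _
    rw [hsqrt1] at hT1
    have hz3 : σ * ε * q ^ (2 + 2*u - (2*m+2)) = (σ * ε * q ^ (2 + 2*u - 2*m)) / q^2 := by
      rw [q2_zpow, show (2:ℤ) + 2*u - (2*m+2) = (2+2*u-2*m) - 2 by ring, zpow_sub₀ hqne]
      ring
    rw [hz3] at hT3
    rw [kappa_pm hq0 hε m, kappa_pm hq0 hτ v]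
    have hκ2 : kappa (ε * q ^ (m-1)) = ε * q ^ (2*m-2) := by
      rw [kappa_pm hq0 hε, show (2:ℤ)*(m-1) = 2*m-2 by ring]
    have hT2 : Real.sqrt (1 + kappa (ε * q ^ (m-1))) *
          ap q (ε * q ^ (m-1)) (σ*q^u) (τ*q^v)
        = (1 + ε*q^(2*m-2)) * (cq q * sfac (σ*q^u) (τ*q^v) * (-1:ℝ)^(m-1) * (-τ)^u * q^v *
            q ^ ((m-1+v-u-1)*(m-1+v-u-2)/2) *
            (Real.sqrt (1+ε*q^(2*m)) * Real.sqrt (qPoch (-(ε*q^(2*m+2))) (q^2) *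
              qPoch (-(τ*q^(2*v))) (q^2) / qPoch (-(σ*q^(2*u))) (q^2))) *
            Psi (-(τ * q ^ (2 - 2*v))) (σ * τ * q ^ (2 + 2*u - 2*v)) (q^2)
              (q^2 * (σ * ε * q ^ (2 + 2*u - 2*m)))) := by
      by_cases hdeg : ε = -1 ∧ m = 1
      · obtain ⟨hd1, hd2⟩ := hdeg
        subst hd1; subst hd2
        have hval : (-1:ℝ) * q ^ ((1:ℤ)-1) = -1 := by norm_num
        rw [hval]
        have hκ : kappa (-1:ℝ) = -1 := by
          rw [kappa, Real.sign_of_neg (by norm_num)]; norm_num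
        rw [hκ]
        have hap0 : ap q (-1) (σ*q^u) (τ*q^v) = 0 := by
          rw [ap, if_neg]
          rintro ⟨hmem, -⟩
          exact neg_one_not_mem hq0 hq1 hmem
        rw [hap0]
        have hz0 : (1:ℝ) + -1 * q ^ (2*(1:ℤ)-2) = 0 := by norm_num
        rw [hz0]
        simp
      · have hcase : ε = 1 ∨ (ε = -1 ∧ 1 ≤ m - 1) := by
          rcases hε' with h | ⟨h, hm⟩
          · exact Or.inl h
          · right
            refine ⟨h, ?_⟩
            rcases eq_or_lt_of_le hm with h2 | h2
            · exact absurd ⟨h, h2.symm⟩ hdeg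
            · omega
        have hpm2 : ε * q ^ (m-1) ∈ Iq q := mem_Iq_pm hcase
        have h := ap_eval (m := m-1) hq0 hq1 hσ hτ hε hxm hym hpm2 hsgn
        have hz2 : σ * ε * q ^ (2 + 2*u - 2*(m-1)) = q^2 * (σ * ε * q ^ (2 + 2*u - 2*m)) := by
          rw [q2_zpow, show (2:ℤ)+2*u-2*(m-1) = 2 + (2+2*u-2*m) by ring, zpow_add₀ hqne]
          ring
        rw [hz2] at h
        have hsp : qPoch (-(ε * q ^ (2*(m-1)))) (q^2)
            = (1 + ε*q^(2*m-2)) * ((1 + ε*q^(2*m)) * qPoch (-(ε*q^(2*m+2))) (q^2)) := by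
          rw [show (2:ℤ)*(m-1) = 2*m-2 by ring, qPoch_step hq0 hq1 ε (2*m-2),
            show (2:ℤ)*m-2+2 = 2*m by ring, qPoch_step hq0 hq1 ε (2*m)]
        rw [hsp] at h
        have hsqrt2 : Real.sqrt ((1 + ε*q^(2*m-2)) * ((1 + ε*q^(2*m)) *
              qPoch (-(ε*q^(2*m+2))) (q^2)) * qPoch (-(τ*q^(2*v))) (q^2) /
              qPoch (-(σ*q^(2*u))) (q^2))
            = Real.sqrt (1 + ε*q^(2*m-2)) * (Real.sqrt (1+ε*q^(2*m)) *
              Real.sqrt (qPoch (-(ε*q^(2*m+2))) (q^2) * qPoch (-(τ*q^(2*v))) (q^2) /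
                qPoch (-(σ*q^(2*u))) (q^2))) := by
          rw [show (1 + ε*q^(2*m-2)) * ((1 + ε*q^(2*m)) * qPoch (-(ε*q^(2*m+2))) (q^2)) *
              qPoch (-(τ*q^(2*v))) (q^2) / qPoch (-(σ*q^(2*u))) (q^2)
              = (1 + ε*q^(2*m-2)) * ((1 + ε*q^(2*m)) * (qPoch (-(ε*q^(2*m+2))) (q^2) *
                qPoch (-(τ*q^(2*v))) (q^2) / qPoch (-(σ*q^(2*u))) (q^2))) by ring,
            Real.sqrt_mul e0, Real.sqrt_mul e1.le]
        rw [hsqrt2] at h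
        rw [hκ2, h]
        have hss : Real.sqrt (1 + ε*q^(2*m-2)) * Real.sqrt (1 + ε*q^(2*m-2))
            = 1 + ε*q^(2*m-2) := Real.mul_self_sqrt e0
        linear_combination (cq q * sfac (σ*q^u) (τ*q^v) * (-1:ℝ)^(m-1) * (-τ)^u * q^v *
          q ^ ((m-1+v-u-1)*(m-1+v-u-2)/2) *
          (Real.sqrt (1+ε*q^(2*m)) * Real.sqrt (qPoch (-(ε*q^(2*m+2))) (q^2) *
            qPoch (-(τ*q^(2*v))) (q^2) / qPoch (-(σ*q^(2*u))) (q^2))) *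
          Psi (-(τ * q ^ (2 - 2*v))) (σ * τ * q ^ (2 + 2*u - 2*v)) (q^2)
            (q^2 * (σ * ε * q ^ (2 + 2*u - 2*m)))) * hss
    rw [mul_assoc (τ * q ^ v * (ε * q ^ m) / (σ * q ^ u))
      (Real.sqrt (1 + kappa (ε * q ^ (m - 1))))]
    rw [hT1, hT2, hT3]
    have master := psi_rec hQ0 hQ1 (-(τ * q ^ (2 - 2*v))) (σ * τ * q ^ (2 + 2*u - 2*v))
      (σ * ε * q ^ (2 + 2*u - 2*m))
    set S1 := Real.sqrt (1 + ε * q ^ (2*m)) with hS1d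
    set SR := Real.sqrt (qPoch (-(ε * q ^ (2*m+2))) (q^2) * qPoch (-(τ * q ^ (2*v))) (q^2) /
      qPoch (-(σ * q ^ (2*u))) (q^2)) with hSRd
    set SF := sfac (σ * q ^ u) (τ * q ^ v) with hSFd
    set TU := (-τ : ℝ) ^ u with hTUd
    set PS1 := Psi (-(τ * q ^ (2 - 2*v))) (σ * τ * q ^ (2 + 2*u - 2*v)) (q^2)
      (σ * ε * q ^ (2 + 2*u - 2*m)) with hPS1
    set PS2 := Psi (-(τ * q ^ (2 - 2*v))) (σ * τ * q ^ (2 + 2*u - 2*v)) (q^2)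
      (q^2 * (σ * ε * q ^ (2 + 2*u - 2*m))) with hPS2
    set PS3 := Psi (-(τ * q ^ (2 - 2*v))) (σ * τ * q ^ (2 + 2*u - 2*v)) (q^2)
      (σ * ε * q ^ (2 + 2*u - 2*m) / q^2) with hPS3
    have hν2 : q ^ ((m-1+v-u-1)*(m-1+v-u-2)/2)
        = q ^ ((m+v-u-1)*(m+v-u-2)/2) * (q*q*q^u/(q^m*q^v)) := by
      have e : (m+v-u-1)*(m+v-u-2) = (m-1+v-u-1)*(m-1+v-u-2) + (m+v-u-2)*2 := by ring
      have h2 := Int.add_mul_ediv_right ((m-1+v-u-1)*(m-1+v-u-2)) (m+v-u-2)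
        (by norm_num : (2:ℤ) ≠ 0)
      rw [← e] at h2
      have hid : (m-1+v-u-1)*(m-1+v-u-2)/2 = (m+v-u-1)*(m+v-u-2)/2 + (1+1+u-(m+v)) := by
        linarith
      rw [hid, zpow_add₀ hqne]
      congr 1
      rw [show (1:ℤ)+1+u-(m+v) = (1+1+u)-(m+v) by ring]
      simp only [zpow_sub₀ hqne, zpow_add₀ hqne, zpow_one]
    have hν3 : q ^ ((m+1+v-u-1)*(m+1+v-u-2)/2)
        = q ^ ((m+v-u-1)*(m+v-u-2)/2) * (q^m*q^v/(q^u*q)) := by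
      have e : (m+1+v-u-1)*(m+1+v-u-2) = (m+v-u-1)*(m+v-u-2) + (m+v-u-1)*2 := by ring
      have h2 := Int.add_mul_ediv_right ((m+v-u-1)*(m+v-u-2)) (m+v-u-1)
        (by norm_num : (2:ℤ) ≠ 0)
      rw [← e] at h2
      have hid : (m+1+v-u-1)*(m+1+v-u-2)/2 = (m+v-u-1)*(m+v-u-2)/2 + (m+v-(u+1)) := by
        linarith
      rw [hid, zpow_add₀ hqne]
      congr 1
      rw [show m+v-(u+1) = (m+v)-(u+1) by ring]
      simp only [zpow_sub₀ hqne, zpow_add₀ hqne, zpow_one]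
    have Em1 : (-1:ℝ) ^ (m-1) = -(-1:ℝ)^m := by
      rw [zpow_sub₀ (by norm_num : (-1:ℝ) ≠ 0), zpow_one, div_neg, div_one]
    have Em2 : (-1:ℝ) ^ (m+1) = -(-1:ℝ)^m := by
      rw [zpow_add₀ (by norm_num : (-1:ℝ) ≠ 0), zpow_one, mul_neg_one]
    have E1 : q ^ ((2:ℤ)*m) = q^m*q^m := by rw [two_mul, zpow_add₀ hqne]
    have E2 : q ^ ((2:ℤ)*v) = q^v*q^v := by rw [two_mul, zpow_add₀ hqne]
    have E4 : q ^ ((2:ℤ)*m-2) = q^m*q^m/(q*q) := by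
      rw [show (2:ℤ)*m-2 = (m+m)-(1+1) by ring]
      simp only [zpow_sub₀ hqne, zpow_add₀ hqne, zpow_one]
    have E5 : q ^ ((2:ℤ)-2*v) = q*q/(q^v*q^v) := by
      rw [show (2:ℤ)-2*v = (1+1)-(v+v) by ring]
      simp only [zpow_sub₀ hqne, zpow_add₀ hqne, zpow_one]
    have E6 : q ^ ((2:ℤ)+2*u-2*v) = q*q*q^u*q^u/(q^v*q^v) := by
      rw [show (2:ℤ)+2*u-2*v = (1+1+u+u)-(v+v) by ring]
      simp only [zpow_sub₀ hqne, zpow_add₀ hqne, zpow_one]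
    have E7 : q ^ ((2:ℤ)+2*u-2*m) = q*q*q^u*q^u/(q^m*q^m) := by
      rw [show (2:ℤ)+2*u-2*m = (1+1+u+u)-(m+m) by ring]
      simp only [zpow_sub₀ hqne, zpow_add₀ hqne, zpow_one]
    rw [hν2, hν3, Em1, Em2, E1, E2, E4]
    rw [E5, E6, E7] at master
    subst hsgn
    have hm0 : q ^ m ≠ 0 := zpow_ne_zero _ hqne
    have hv0 : q ^ v ≠ 0 := zpow_ne_zero _ hqne
    have hu0 : q ^ u ≠ 0 := zpow_ne_zero _ hqne
    rcases hσ with rfl | rfl <;> rcases hτ with rfl | rfl <;>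
      linear_combination (norm := (field_simp; ring))
        ((-1:ℝ)^m * q^((m+v-u-1)*(m+v-u-2)/2) * (q^m*q^v/q^u)^2 / (q*q) *
        (cq q * SF * TU * q^v * S1 * SR)) * master
  · have hστ : σ * τ = 1 ∨ σ * τ = -1 := by
      rcases hσ with h|h <;> rcases hτ with h'|h' <;> subst h <;> subst h' <;> norm_num
    have hz : ∀ m' : ℤ, ap q (ε * q ^ m') (σ * q ^ u) (τ * q ^ v) = 0 := by
      intro m'
      rw [ap, if_neg]
      rintro ⟨-, -, -, hc⟩
      rw [pm_mul hq0, sign_pm hq0 hστ, sign_pm hq0 hε] at hc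
      exact hsgn hc
    rw [hz m, hz (m-1), hz (m+1)]
    ring
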